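/- For all natural numbers l and n, let g : ℝ → ℝ be the function g(y) = e^{−y} · y^{l+n}, and let g^{(l)} denote its l-th derivative. Then ∫₀^∞ e^{y/2} · g^{(l)}(y) dy = (−1)^l · 2^{n+1} · (l+n)!. -/

import Mathlib

open MeasureTheory

private lemma smooth_g (m : ℕ) :
    ContDiff ℝ (⊤ : ℕ∞) (fun y : ℝ => Real.exp (-y) * y ^ m) :=
  (Real.contDiff_exp.comp contDiff_neg).mul (contDiff_id.pow m)

private lemma deriv_g (m : ℕ) :
    deriv (fun y : ℝ => Real.exp (-y) * y ^ (m + 1)) =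
      fun y => ((m : ℝ) + 1) * (Real.exp (-y) * y ^ m) - Real.exp (-y) * y ^ (m + 1) := by
  funext y
  have h1 : HasDerivAt (fun y : ℝ => Real.exp (-y)) (-Real.exp (-y)) y := by
    simpa using (hasDerivAt_neg y).exp
  have h2 : HasDerivAt (fun y : ℝ => y ^ (m + 1)) (((m : ℝ) + 1) * y ^ m) y := by
    simpa using hasDerivAt_pow (m + 1) y
  rw [(show HasDerivAt (fun y : ℝ => Real.exp (-y) * y ^ (m + 1)) _ y from h1.mul h2).deriv]
  ring

private lemma iteratedDeriv_lin (l : ℕ) (c : ℝ) {f g : ℝ → ℝ}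
    (hf : ContDiff ℝ (⊤ : ℕ∞) f) (hg : ContDiff ℝ (⊤ : ℕ∞) g) (y : ℝ) :
    iteratedDeriv l (fun y => c * f y - g y) y =
      c * iteratedDeriv l f y - iteratedDeriv l g y := by
  have e : (fun y => c * f y - g y) = ((fun y => c * f y) - g) := rfl
  rw [e, ← iteratedDerivWithin_univ, ← iteratedDerivWithin_univ, ← iteratedDerivWithin_univ,
    iteratedDerivWithin_sub (Set.mem_univ y) uniqueDiffOn_univ
      ((contDiff_const.mul hf).contDiffWithinAt.of_le (mod_cast le_top)) (hg.contDiffWithinAt.of_le (mod_cast le_top)),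
    iteratedDerivWithin_const_mul (Set.mem_univ y) uniqueDiffOn_univ c
      (hf.contDiffWithinAt.of_le (mod_cast le_top))]

private lemma integrable_base (m : ℕ) :
    IntegrableOn (fun y : ℝ => Real.exp (y / 2) * (Real.exp (-y) * y ^ m)) (Set.Ioi 0) := by
  have h := Real.GammaIntegral_convergent (s := (m : ℝ) + 1) (by positivity)
  have h' : IntegrableOn (fun x : ℝ => Real.exp (-x) * x ^ m) (Set.Ioi 0) := by
    have : ∀ x : ℝ, Real.exp (-x) * x ^ (((m : ℝ) + 1) - 1) = Real.exp (-x) * x ^ m := by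
      intro x
      rw [add_sub_cancel_right, Real.rpow_natCast]
    simpa [this] using h
  have h2 := (integrableOn_Ioi_comp_mul_left_iff
      (fun x : ℝ => Real.exp (-x) * x ^ m) 0 (by norm_num : (0 : ℝ) < 1 / 2)).2
      (by simpa using h')
  have h3 := h2.const_mul ((2 : ℝ) ^ m)
  refine IntegrableOn.congr_fun h3 (fun y _ => ?_) measurableSet_Ioi
  have hone : (2 : ℝ) ^ m * (1 / 2 : ℝ) ^ m = 1 := by rw [← mul_pow]; norm_num
  have hexp : Real.exp (y / 2) * Real.exp (-y) = Real.exp (-(1 / 2 * y)) := by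
    rw [← Real.exp_add]; congr 1; ring
  rw [mul_pow, ← hexp]
  linear_combination (Real.exp (y / 2) * Real.exp (-y) * y ^ m) * hone

private lemma value_base (m : ℕ) :
    (∫ y in Set.Ioi (0 : ℝ), Real.exp (y / 2) * (Real.exp (-y) * y ^ m)) =
      2 ^ (m + 1) * (m.factorial : ℝ) := by
  have key := Real.integral_rpow_mul_exp_neg_mul_Ioi
    (a := (m : ℝ) + 1) (r := 1 / 2) (by positivity) (by norm_num)
  have e1 : ∀ y ∈ Set.Ioi (0 : ℝ),
      y ^ (((m : ℝ) + 1) - 1) * Real.exp (-(1 / 2 * y)) =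
        Real.exp (y / 2) * (Real.exp (-y) * y ^ m) := by
    intro y _
    rw [add_sub_cancel_right, Real.rpow_natCast, ← mul_assoc,
      show Real.exp (y / 2) * Real.exp (-y) = Real.exp (-(1 / 2 * y)) by
        rw [← Real.exp_add]; ring_nf]
    ring
  rw [setIntegral_congr_fun measurableSet_Ioi e1] at key
  rw [key]
  have e2 : ((1 : ℝ) / (1 / 2)) = 2 := by norm_num
  rw [e2, Real.Gamma_nat_eq_factorial,
    show ((m : ℝ) + 1) = ((m + 1 : ℕ) : ℝ) by push_cast; ring, Real.rpow_natCast]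

private lemma key_lemma :
    ∀ l m : ℕ, l ≤ m →
      IntegrableOn (fun y : ℝ => Real.exp (y / 2) *
        iteratedDeriv l (fun y : ℝ => Real.exp (-y) * y ^ m) y) (Set.Ioi 0) ∧
      (∫ y in Set.Ioi (0 : ℝ), Real.exp (y / 2) *
        iteratedDeriv l (fun y : ℝ => Real.exp (-y) * y ^ m) y) =
        (-(1 / 2) : ℝ) ^ l * (2 ^ (m + 1) * m.factorial) := by
  intro l
  induction l with
  | zero =>
    intro m _
    simp only [iteratedDeriv_zero, pow_zero, one_mul]
    exact ⟨integrable_base m, value_base m⟩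
  | succ l ih =>
    intro m hm
    obtain ⟨k, rfl⟩ : ∃ k, m = k + 1 := ⟨m - 1, by omega⟩
    have hlk : l ≤ k := by omega
    have hlk1 : l ≤ k + 1 := by omega
    have hfun : ∀ y : ℝ,
        iteratedDeriv (l + 1) (fun y : ℝ => Real.exp (-y) * y ^ (k + 1)) y =
          ((k : ℝ) + 1) * iteratedDeriv l (fun y : ℝ => Real.exp (-y) * y ^ k) y -
            iteratedDeriv l (fun y : ℝ => Real.exp (-y) * y ^ (k + 1)) y := by
      intro y
      rw [iteratedDeriv_succ', deriv_g k]
      exact iteratedDeriv_lin l _ (smooth_g k) (smooth_g (k + 1)) y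
    have hint1 := (ih k hlk).1
    have hint2 := (ih (k + 1) hlk1).1
    have hint1' := hint1.const_mul ((k : ℝ) + 1)
    have heq : ∀ y : ℝ,
        Real.exp (y / 2) * iteratedDeriv (l + 1) (fun y : ℝ => Real.exp (-y) * y ^ (k + 1)) y =
          ((k : ℝ) + 1) * (Real.exp (y / 2) *
              iteratedDeriv l (fun y : ℝ => Real.exp (-y) * y ^ k) y) -
            Real.exp (y / 2) * iteratedDeriv l (fun y : ℝ => Real.exp (-y) * y ^ (k + 1)) y := by
      intro y; rw [hfun y]; ring
    constructor
    · exact IntegrableOn.congr_fun (hint1'.sub hint2) (fun y _ => (heq y).symm) measurableSet_Ioi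
    · rw [setIntegral_congr_fun measurableSet_Ioi (fun y _ => heq y),
        integral_sub hint1' hint2, integral_const_mul, (ih k hlk).2, (ih (k + 1) hlk1).2]
      have : ((k + 1).factorial : ℝ) = ((k : ℝ) + 1) * k.factorial := by
        rw [Nat.factorial_succ]; push_cast; ring
      rw [this]
      ring

/-- For natural numbers `l` and `n`, with `g(y) = e^{−y} y^{l+n}`,
`∫₀^∞ e^{y/2} g^{(l)}(y) dy = (−1)^l 2^{n+1} (l+n)!`. -/
theorem integral_exp_half_mul_iteratedDeriv (l n : ℕ) :
    (∫ y in Set.Ioi (0 : ℝ),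
        Real.exp (y / 2) *
          iteratedDeriv l (fun y : ℝ => Real.exp (-y) * y ^ (l + n)) y) =
      (-1 : ℝ) ^ l * 2 ^ (n + 1) * ((l + n).factorial : ℝ) := by
  rw [(key_lemma l (l + n) (Nat.le_add_right l n)).2]
  have h2 : ((2 : ℝ)) ^ l ≠ 0 := by positivity
  rw [show (-(1 / 2) : ℝ) = (-1) / 2 by norm_num, div_pow,
    show l + n + 1 = l + (n + 1) by ring, pow_add]
  field_simp
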